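/- With the Levi-Civita connection ∇ of the 5-dimensional example (determined by the Koszul formula from the given brackets and metric), the operator x ↦ ∇ₓξ restricted to span(e₁,e₂,e₃,e₄) commutes with φ, i.e., ∇_{φx}ξ = φ(∇ₓξ) for all x, and moreover g(∇ₓξ, y) = g(∇_y ξ, x) for all x, y (the shape operator is g-symmetric). -/
import Mathlib


open Finset

noncomputable section

/-- The standard basis of ℝ⁵; `e 4` plays the role of ξ. -/
def e (i : Fin 5) : Fin 5 → ℝ := Pi.single i 1

/-- The Reeb vector ξ = e₅. -/
def xi : Fin 5 → ℝ := e 4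

/-- The contact form η, dual to ξ. -/
def eta (x : Fin 5 → ℝ) : ℝ := x 4

/-- The structure endomorphism: φe₁ = e₃, φe₂ = e₄, φe₃ = -e₁, φe₄ = -e₂, φξ = 0. -/
def phi (x : Fin 5 → ℝ) : Fin 5 → ℝ := ![-(x 2), -(x 3), x 0, x 1, 0]

/-- The B-metric g = diag(1,1,-1,-1,1). -/
def gf (x y : Fin 5 → ℝ) : ℝ := x 0 * y 0 + x 1 * y 1 - x 2 * y 2 - x 3 * y 3 + x 4 * y 4

/-- The signs εᵢ = g(eᵢ,eᵢ). -/
def eps : Fin 5 → ℝ := ![1, 1, -1, -1, 1]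

/-- The operator x ↦ [x, ξ] on span(e₁,…,e₄), determined by the paper's commutators. -/
def D (l1 l2 l3 l4 m1 m3 : ℝ) (x : Fin 5 → ℝ) : Fin 5 → ℝ :=
  ![l1 * x 0 + m1 * x 1 - l3 * x 2 - m3 * x 3,
    l2 * x 0 - l1 * x 1 - l4 * x 2 + l3 * x 3,
    l3 * x 0 + m3 * x 1 + l1 * x 2 + m1 * x 3,
    l4 * x 0 - l3 * x 1 + l2 * x 2 - l1 * x 3,
    0]

/-- The Lie bracket: span(e₁,…,e₄) is abelian, [x,ξ] = D x, extended bilinearly and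
antisymmetrically. -/
def br (l1 l2 l3 l4 m1 m3 : ℝ) (x y : Fin 5 → ℝ) : Fin 5 → ℝ :=
  y 4 • D l1 l2 l3 l4 m1 m3 x - x 4 • D l1 l2 l3 l4 m1 m3 y

/-- The Levi-Civita connection via the Koszul formula
2g(∇ₓy, z) = g([x,y],z) + g([z,x],y) + g([z,y],x), recovered componentwise in the
orthogonal basis. -/
def nabla (l1 l2 l3 l4 m1 m3 : ℝ) (x y : Fin 5 → ℝ) : Fin 5 → ℝ :=
  fun i => eps i * ((gf (br l1 l2 l3 l4 m1 m3 x y) (e i)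
    + gf (br l1 l2 l3 l4 m1 m3 (e i) x) y
    + gf (br l1 l2 l3 l4 m1 m3 (e i) y) x) / 2)

/-- The curvature tensor R(x,y)z = ∇ₓ∇_y z - ∇_y∇ₓ z - ∇_{[x,y]} z. -/
def Rc (l1 l2 l3 l4 m1 m3 : ℝ) (x y z : Fin 5 → ℝ) : Fin 5 → ℝ :=
  nabla l1 l2 l3 l4 m1 m3 x (nabla l1 l2 l3 l4 m1 m3 y z)
    - nabla l1 l2 l3 l4 m1 m3 y (nabla l1 l2 l3 l4 m1 m3 x z)
    - nabla l1 l2 l3 l4 m1 m3 (br l1 l2 l3 l4 m1 m3 x y) z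

/-- The Ricci tensor ρ(y,z) = Σᵢ εᵢ g(R(eᵢ,y)z, eᵢ). -/
def rho (l1 l2 l3 l4 m1 m3 : ℝ) (y z : Fin 5 → ℝ) : ℝ :=
  ∑ i : Fin 5, eps i * gf (Rc l1 l2 l3 l4 m1 m3 (e i) y z) (e i)

/-- The scalar curvature τ = Σⱼ εⱼ ρ(eⱼ,eⱼ). -/
def tau (l1 l2 l3 l4 m1 m3 : ℝ) : ℝ :=
  ∑ j : Fin 5, eps j * rho l1 l2 l3 l4 m1 m3 (e j) (e j)

/-- The associated Ricci tensor ρ*(y,z) = Σᵢ εᵢ g(R(eᵢ,y)z, φeᵢ). -/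
def rhoStar (l1 l2 l3 l4 m1 m3 : ℝ) (y z : Fin 5 → ℝ) : ℝ :=
  ∑ i : Fin 5, eps i * gf (Rc l1 l2 l3 l4 m1 m3 (e i) y z) (phi (e i))

/-- The associated scalar curvature τ* = Σⱼ εⱼ ρ*(eⱼ,eⱼ). -/
def tauStar (l1 l2 l3 l4 m1 m3 : ℝ) : ℝ :=
  ∑ j : Fin 5, eps j * rhoStar l1 l2 l3 l4 m1 m3 (e j) (e j)

/-- The fundamental tensor F(x,y,z) = g((∇ₓφ)y, z) = g(∇ₓ(φy) - φ(∇ₓy), z). -/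
def Ften (l1 l2 l3 l4 m1 m3 : ℝ) (x y z : Fin 5 → ℝ) : ℝ :=
  gf (nabla l1 l2 l3 l4 m1 m3 x (phi y) - phi (nabla l1 l2 l3 l4 m1 m3 x y)) z

/-- The square norm ‖∇φ‖² = Σᵢₖ εᵢ εₖ g((∇_{eᵢ}φ)eₖ, (∇_{eᵢ}φ)eₖ). -/
def snPhi (l1 l2 l3 l4 m1 m3 : ℝ) : ℝ :=
  ∑ i : Fin 5, ∑ k : Fin 5, eps i * eps k *
    gf (nabla l1 l2 l3 l4 m1 m3 (e i) (phi (e k)) - phi (nabla l1 l2 l3 l4 m1 m3 (e i) (e k)))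
       (nabla l1 l2 l3 l4 m1 m3 (e i) (phi (e k)) - phi (nabla l1 l2 l3 l4 m1 m3 (e i) (e k)))

set_option maxHeartbeats 1000000 in
lemma nabla_xi (l1 l2 l3 l4 m1 m3 : ℝ) (x : Fin 5 → ℝ) :
    nabla l1 l2 l3 l4 m1 m3 x xi =
      ![l1 * x 0 + (l2 + m1)/2 * x 1 - l3 * x 2 - (l4 + m3)/2 * x 3,
        (l2 + m1)/2 * x 0 - l1 * x 1 - (l4 + m3)/2 * x 2 + l3 * x 3,
        l3 * x 0 + (l4 + m3)/2 * x 1 + l1 * x 2 + (l2 + m1)/2 * x 3,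
        (l4 + m3)/2 * x 0 - l3 * x 1 + (l2 + m1)/2 * x 2 - l1 * x 3,
        0] := by
  funext i
  fin_cases i <;>
    · simp only [Fin.isValue, Fin.mk_zero, Fin.mk_one]
      show eps _ * ((gf (br l1 l2 l3 l4 m1 m3 x xi) (e _)
        + gf (br l1 l2 l3 l4 m1 m3 (e _) x) xi
        + gf (br l1 l2 l3 l4 m1 m3 (e _) xi) x) / 2) = _
      simp (config := { decide := true }) only [br, D, gf, xi, e, eps, Pi.single_apply, Pi.sub_apply, Pi.smul_apply,
        smul_eq_mul, Matrix.cons_val_zero, Matrix.cons_val_one, Matrix.head_cons,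
        Matrix.cons_val_two, Matrix.tail_cons, Matrix.cons_val_three, Matrix.cons_val_four,
        Matrix.cons_val_fin_one, Fin.reduceEq, reduceIte]
      norm_num
      try ring

/-- The operator x ↦ ∇ₓξ commutes with φ and is g-symmetric. -/
theorem stmt12 (l1 l2 l3 l4 m1 m3 : ℝ) :
    (∀ x : Fin 5 → ℝ,
      nabla l1 l2 l3 l4 m1 m3 (phi x) xi = phi (nabla l1 l2 l3 l4 m1 m3 x xi)) ∧
    (∀ x y : Fin 5 → ℝ,
      gf (nabla l1 l2 l3 l4 m1 m3 x xi) y = gf (nabla l1 l2 l3 l4 m1 m3 y xi) x) := by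
  constructor
  · intro x
    rw [nabla_xi, nabla_xi]
    funext i
    fin_cases i <;>
      simp only [phi, Matrix.cons_val_zero, Matrix.cons_val_one, Matrix.head_cons,
        Matrix.cons_val_two, Matrix.tail_cons, Matrix.cons_val_three, Matrix.cons_val_four,
        Matrix.cons_val_fin_one] <;> ring
  · intro x y
    rw [nabla_xi, nabla_xi]
    simp only [gf, Matrix.cons_val_zero, Matrix.cons_val_one, Matrix.head_cons,
      Matrix.cons_val_two, Matrix.tail_cons, Matrix.cons_val_three, Matrix.cons_val_four,
      Matrix.cons_val_fin_one]
    ring
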